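/- The Heawood graph, i.e. the point–line incidence graph of the projective plane PG(2,2) (the Fano plane), has metric dimension 5. -/

import Mathlib

/-- `S` is a resolving set for the graph `G`: every pair of distinct vertices is
resolved by some vertex of `S` (via the geodesic distance `SimpleGraph.dist`). -/
def IsResolvingSet {V : Type*} (G : SimpleGraph V) (S : Set V) : Prop :=
  ∀ u w : V, u ≠ w → ∃ v ∈ S, G.dist u v ≠ G.dist w v

/-- The metric dimension of `G`: the smallest size of a resolving set. -/
noncomputable def metricDim {V : Type*} (G : SimpleGraph V) : ℕ :=
  sInf {n : ℕ | ∃ S : Finset V, IsResolvingSet G (↑S) ∧ S.card = n}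

/-- The Heawood graph: the point–line incidence graph of the Fano plane
`PG(2,2)`.  Vertices are two copies (indexed by `Bool`) of the set of nonzero
vectors of the 3-dimensional vector space over `ℤ/2ℤ`; a vertex in one copy is
adjacent to a vertex in the other copy iff the dot product of the two vectors
is zero. -/
def heawoodGraph : SimpleGraph ({v : Fin 3 → ZMod 2 // v ≠ 0} × Bool) where
  Adj x y := x.2 ≠ y.2 ∧ ∑ k : Fin 3, x.1.val k * y.1.val k = 0
  symm := ⟨fun x y h => ⟨h.1.symm, by
    rw [← h.2]
    exact Finset.sum_congr rfl fun k _ => mul_comm _ _⟩⟩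
  loopless := ⟨fun x h => h.1 rfl⟩

abbrev HV := {v : Fin 3 → ZMod 2 // v ≠ 0} × Bool

instance (x y : HV) : Decidable (heawoodGraph.Adj x y) :=
  inferInstanceAs (Decidable (x.2 ≠ y.2 ∧ ∑ k : Fin 3, x.1.val k * y.1.val k = 0))

/-- Numeric distance function on `Fin 14`. -/
def hD (a b : Fin 14) : ℕ :=
  if a = b then 0
  else
    let pa := a.val % 7 + 1
    let pb := b.val % 7 + 1
    let sa := decide (a.val < 7)
    let sb := decide (b.val < 7)
    if sa ≠ sb ∧ (Nat.land pa pb % 2 + Nat.land pa pb / 2 % 2 + Nat.land pa pb / 4) % 2 = 0 then 1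
    else if sa = sb then 2 else 3

/-- Encoding of Heawood vertices as `Fin 14`. -/
def hf (x : HV) : Fin 14 :=
  ⟨((x.1.val 0).val + 2 * (x.1.val 1).val + 4 * (x.1.val 2).val - 1
      + (if x.2 then 7 else 0)) % 14, Nat.mod_lt _ (by norm_num)⟩

instance : Decidable (∀ x y : HV, hf x = hf y → x = y) :=
  Fintype.decidableForallFintype (α := HV)

lemma hf_inj : Function.Injective hf := by
  have h : ∀ x y : HV, hf x = hf y → x = y := by decide
  exact fun x y => h x y

instance : Decidable (∀ x y : HV, heawoodGraph.Adj x y ↔ hD (hf x) (hf y) = 1) :=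
  Fintype.decidableForallFintype (α := HV)

lemma hD_one : ∀ x y : HV, heawoodGraph.Adj x y ↔ hD (hf x) (hf y) = 1 := by decide

instance : Decidable (∀ x y : HV, x ≠ y → x.2 = y.2 → hD (hf x) (hf y) = 2) :=
  Fintype.decidableForallFintype (α := HV)

lemma hD_two : ∀ x y : HV, x ≠ y → x.2 = y.2 → hD (hf x) (hf y) = 2 := by decide

instance : Decidable (∀ x y : HV, ¬heawoodGraph.Adj x y → x.2 ≠ y.2 → hD (hf x) (hf y) = 3) :=
  Fintype.decidableForallFintype (α := HV)

lemma hD_three : ∀ x y : HV, ¬heawoodGraph.Adj x y → x.2 ≠ y.2 → hD (hf x) (hf y) = 3 := by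
  decide

instance : Decidable (∀ x y : HV, x ≠ y → x.2 = y.2 →
    ∃ z, heawoodGraph.Adj x z ∧ heawoodGraph.Adj z y) :=
  Fintype.decidableForallFintype (α := HV)

lemma two_step : ∀ x y : HV, x ≠ y → x.2 = y.2 →
    ∃ z, heawoodGraph.Adj x z ∧ heawoodGraph.Adj z y := by decide

instance (x y : HV) :
    Decidable (∃ z w : HV, heawoodGraph.Adj x z ∧ heawoodGraph.Adj z w ∧ heawoodGraph.Adj w y) :=
  Fintype.decidableExistsFintype (α := HV)

instance : Decidable (∀ x y : HV, ¬heawoodGraph.Adj x y → x.2 ≠ y.2 →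
    ∃ z w : HV, heawoodGraph.Adj x z ∧ heawoodGraph.Adj z w ∧ heawoodGraph.Adj w y) :=
  Fintype.decidableForallFintype (α := HV)

lemma three_step : ∀ x y : HV, ¬heawoodGraph.Adj x y → x.2 ≠ y.2 →
    ∃ z w : HV, heawoodGraph.Adj x z ∧ heawoodGraph.Adj z w ∧ heawoodGraph.Adj w y := by decide

/-- Bipartite parity of walks in the Heawood graph. -/
lemma walk_parity {x y : HV} (p : heawoodGraph.Walk x y) : x.2 = y.2 ↔ Even p.length := by
  induction p with
  | nil => simp
  | @cons u v w h p ih =>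
    have hne : u.2 ≠ v.2 := (show u.2 ≠ v.2 ∧ ∑ k : Fin 3, u.1.val k * v.1.val k = 0 from h).1
    simp only [SimpleGraph.Walk.length_cons, Nat.even_add_one, ← ih]
    cases hu : u.2 <;> cases hv : v.2 <;> cases hw : w.2 <;> simp_all

/-- The geodesic distance in the Heawood graph agrees with the numeric table. -/
lemma heawood_dist_eq (x y : HV) : heawoodGraph.dist x y = hD (hf x) (hf y) := by
  by_cases hxy : x = y
  · subst hxy
    rw [SimpleGraph.dist_self]
    simp [hD]
  by_cases hadj : heawoodGraph.Adj x y
  · rw [SimpleGraph.dist_eq_one_iff_adj.mpr hadj, (hD_one x y).mp hadj]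
  by_cases hside : x.2 = y.2
  · rw [hD_two x y hxy hside]
    obtain ⟨z, h1, h2⟩ := two_step x y hxy hside
    have hle : heawoodGraph.dist x y ≤ 2 := by
      simpa using SimpleGraph.dist_le (SimpleGraph.Walk.cons h1 (SimpleGraph.Walk.cons h2 SimpleGraph.Walk.nil))
    have hne1 : heawoodGraph.dist x y ≠ 1 := fun h =>
      hadj (SimpleGraph.dist_eq_one_iff_adj.mp h)
    have hne0 : heawoodGraph.dist x y ≠ 0 := by
      intro h0
      rcases SimpleGraph.dist_eq_zero_iff_eq_or_not_reachable.mp h0 with h | h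
      · exact hxy h
      · exact h ⟨SimpleGraph.Walk.cons h1 (SimpleGraph.Walk.cons h2 SimpleGraph.Walk.nil)⟩
    omega
  · rw [hD_three x y hadj hside]
    obtain ⟨z, w, h1, h2, h3⟩ := three_step x y hadj hside
    have hreach : heawoodGraph.Reachable x y :=
      ⟨SimpleGraph.Walk.cons h1 (SimpleGraph.Walk.cons h2 (SimpleGraph.Walk.cons h3 SimpleGraph.Walk.nil))⟩
    have hle : heawoodGraph.dist x y ≤ 3 := by
      simpa using SimpleGraph.dist_le (SimpleGraph.Walk.cons h1 (SimpleGraph.Walk.cons h2 (SimpleGraph.Walk.cons h3 SimpleGraph.Walk.nil)))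
    have hne1 : heawoodGraph.dist x y ≠ 1 := fun h =>
      hadj (SimpleGraph.dist_eq_one_iff_adj.mp h)
    have hne0 : heawoodGraph.dist x y ≠ 0 := by
      intro h0
      rcases SimpleGraph.dist_eq_zero_iff_eq_or_not_reachable.mp h0 with h | h
      · exact hxy h
      · exact h hreach
    have hne2 : heawoodGraph.dist x y ≠ 2 := by
      intro h2d
      obtain ⟨p, hp⟩ := hreach.exists_walk_length_eq_dist
      exact hside ((walk_parity p).mpr (by rw [hp, h2d]; exact ⟨1, rfl⟩))
    omega

/-- An explicit resolving set of size 5. -/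
def hS5 : Finset HV :=
  { (⟨![1, 0, 0], by decide⟩, false), (⟨![0, 1, 0], by decide⟩, false),
    (⟨![0, 0, 1], by decide⟩, false), (⟨![1, 1, 0], by decide⟩, true),
    (⟨![1, 0, 1], by decide⟩, true) }

lemma hS5_card : hS5.card = 5 := by decide

instance : Decidable (∀ u w : HV, u ≠ w → ∃ v ∈ hS5, hD (hf u) (hf v) ≠ hD (hf w) (hf v)) :=
  Fintype.decidableForallFintype (α := HV)

lemma hS5_resolving : IsResolvingSet heawoodGraph ↑hS5 := by
  have key : ∀ u w : HV, u ≠ w → ∃ v ∈ hS5, hD (hf u) (hf v) ≠ hD (hf w) (hf v) := by decide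
  intro u w huw
  obtain ⟨v, hv, hd⟩ := key u w huw
  exact ⟨v, Finset.mem_coe.mpr hv, by rw [heawood_dist_eq, heawood_dist_eq]; exact hd⟩

set_option maxHeartbeats 4000000 in
set_option maxRecDepth 100000 in
/-- No 4 vertices (given as a sorted tuple of codes) resolve the Heawood graph. -/
lemma no_four : ∀ a b c d : Fin 14, a ≤ b → b ≤ c → c ≤ d →
    ∃ u : Fin 14, ∃ w : Fin 14, u ≠ w ∧
      hD u a = hD w a ∧ hD u b = hD w b ∧ hD u c = hD w c ∧ hD u d = hD w d := by decide

lemma list_eq_four {α : Type*} : ∀ (l : List α), l.length = 4 → ∃ a b c d, l = [a, b, c, d]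
  | [a, b, c, d], _ => ⟨a, b, c, d, rfl⟩

lemma lower_bound (S : Finset HV) (h : IsResolvingSet heawoodGraph ↑S) : 5 ≤ S.card := by
  by_contra hlt
  push_neg at hlt
  have hS4 : S.card ≤ 4 := by omega
  obtain ⟨T, hST, -, hT4⟩ := Finset.exists_subsuperset_card_eq S.subset_univ hS4
    (by rw [Finset.card_univ]; decide)
  have hT'4 : (T.image hf).card = 4 := by
    rw [Finset.card_image_of_injective _ hf_inj, hT4]
  have hlen : ((T.image hf).sort (· ≤ ·)).length = 4 := by
    rw [Finset.length_sort, hT'4]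
  obtain ⟨a, b, c, d, hm⟩ := list_eq_four _ hlen
  have hsorted : ((T.image hf).sort (· ≤ ·)).Pairwise (· ≤ ·) := Finset.pairwise_sort _ _
  rw [hm] at hsorted
  simp only [List.pairwise_cons, List.mem_cons] at hsorted
  obtain ⟨u, w, huw, h1, h2, h3, h4⟩ :=
    no_four a b c d (hsorted.1 b (by tauto)) (hsorted.2.1 c (by tauto)) (hsorted.2.2.1 d (by tauto))
  have hbij : Function.Bijective hf :=
    (Fintype.bijective_iff_injective_and_card hf).mpr ⟨hf_inj, by decide⟩
  obtain ⟨x, hx⟩ := hbij.2 u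
  obtain ⟨y, hy⟩ := hbij.2 w
  have hxy : x ≠ y := by rintro rfl; rw [hx] at hy; exact huw hy
  obtain ⟨v, hvS, hdv⟩ := h x y hxy
  apply hdv
  rw [heawood_dist_eq, heawood_dist_eq, hx, hy]
  have hvT : hf v ∈ (T.image hf).sort (· ≤ ·) := by
    rw [Finset.mem_sort]
    exact Finset.mem_image_of_mem hf (hST (Finset.mem_coe.mp hvS))
  rw [hm] at hvT
  simp only [List.mem_cons, List.not_mem_nil, or_false] at hvT
  rcases hvT with hv | hv | hv | hv <;> rw [hv]
  · exact h1
  · exact h2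
  · exact h3
  · exact h4

theorem metricDim_heawoodGraph : metricDim heawoodGraph = 5 := by
  have h5 : (5 : ℕ) ∈ {n : ℕ | ∃ S : Finset HV, IsResolvingSet heawoodGraph (↑S) ∧ S.card = n} :=
    ⟨hS5, hS5_resolving, hS5_card⟩
  refine le_antisymm (Nat.sInf_le h5) (le_csInf ⟨5, h5⟩ ?_)
  rintro n ⟨S, hS, rfl⟩
  exact lower_bound S hS
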